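/- If Σ_{i=1}^{∞} p_i = +∞, then every summable sequence μ = (μ_i)_{i≥0} ∈ ℓ¹(ℕ) satisfying μS = μ (i.e. μ_j = Σ_{i≥0} μ_i S_{i,j} for all j ≥ 0) is identically zero; in particular the Markov chain with transition matrix S admits no invariant probability measure, so if in addition Π_{i=1}^{∞} p_i = 0 the chain is null recurrent. -/

import Mathlib

/-- Fibonacci sequence with `F 0 = 1`, `F 1 = 2`, `F (n+2) = F (n+1) + F n`. -/
def fibF : ℕ → ℕ
  | 0 => 1
  | 1 => 2
  | (n+2) => fibF (n+1) + fibF n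

lemma fibF_pos : ∀ n, 0 < fibF n
  | 0 => by simp [fibF]
  | 1 => by simp [fibF]
  | (n+2) => by
      have h1 := fibF_pos (n+1)
      simp only [fibF]
      omega

lemma fibF_add_two (n : ℕ) : fibF (n+2) = fibF (n+1) + fibF n := rfl

lemma fibF_ge : ∀ n, n + 1 ≤ fibF n
  | 0 => by simp [fibF]
  | 1 => by simp [fibF]
  | (n+2) => by
      have h1 := fibF_ge (n+1)
      have h2 := fibF_pos n
      simp only [fibF]; omega

lemma fibF_strictMono : StrictMono fibF := by
  apply strictMono_nat_of_lt_succ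
  intro n
  match n with
  | 0 => simp [fibF]
  | (n+1) => have := fibF_pos n; simp only [fibF]; omega

lemma fibF_two_le (r : ℕ) (hr : 1 ≤ r) : 2 ≤ fibF r := by
  have : fibF 1 ≤ fibF r := fibF_strictMono.monotone hr
  simpa [fibF] using this

/-- Sum of Fibonacci numbers over a finite index set. -/
def sumF (A : Finset ℕ) : ℕ := ∑ k ∈ A, fibF k

/-- Admissibility: no two consecutive indices. -/
def Adm (A : Finset ℕ) : Prop := ∀ k ∈ A, k + 1 ∉ A

lemma Adm.mono {A B : Finset ℕ} (h : Adm B) (hAB : A ⊆ B) : Adm A :=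
  fun k hk hk1 => h k (hAB hk) (hAB hk1)

lemma sumF_le_sumF {A B : Finset ℕ} (h : A ⊆ B) : sumF A ≤ sumF B :=
  Finset.sum_le_sum_of_subset h

lemma fibF_le_sumF {A : Finset ℕ} {k : ℕ} (h : k ∈ A) : fibF k ≤ sumF A :=
  Finset.single_le_sum (fun _ _ => Nat.zero_le _) h

lemma sumF_lt : ∀ (K : ℕ) (A : Finset ℕ), Adm A → (∀ k ∈ A, k ≤ K) →
    sumF A < fibF (K+1) := by
  intro K
  induction K using Nat.strong_induction_on with
  | _ K ih =>
    intro A hA hK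
    rcases A.eq_empty_or_nonempty with rfl | hne
    · simpa [sumF] using fibF_pos (K+1)
    · set M := A.max' hne with hM
      have hMA : M ∈ A := A.max'_mem hne
      have hMK : M ≤ K := hK M hMA
      have hMsub : ∀ k ∈ A.erase M, k + 2 ≤ M := by
        intro k hk
        have hkA := Finset.mem_of_mem_erase hk
        have hkM : k ≠ M := Finset.ne_of_mem_erase hk
        have hkle : k ≤ M := A.le_max' k hkA
        have : k ≠ M - 1 := by
          intro h; subst h
          have hM1 : M - 1 + 1 = M := by omega
          exact hA (M-1) hkA (by rw [hM1]; exact hMA)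
        omega
      have hsplit : sumF A = fibF M + sumF (A.erase M) := by
        simpa [sumF] using (Finset.add_sum_erase A fibF hMA).symm
      by_cases hM2 : 2 ≤ M
      · have herase : sumF (A.erase M) < fibF (M - 2 + 1) :=
          ih (M-2) (by omega) (A.erase M) (hA.mono (A.erase_subset M))
            (fun k hk => by have := hMsub k hk; omega)
        have hMeq : M - 2 + 1 + 1 = M := by omega
        have : sumF A < fibF M + fibF (M-2+1) := by omega
        have h2 : fibF M + fibF (M - 2 + 1) = fibF (M+1) := by
          have := fibF_add_two (M-2+1)
          rw [show M - 2 + 1 + 2 = M + 1 by omega] at this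
          rw [this, hMeq]
        have hle : fibF (M+1) ≤ fibF (K+1) := fibF_strictMono.monotone (by omega)
        omega
      · -- M = 0 or 1 : A = {M}
        have hAe : A = {M} := by
          apply Finset.eq_singleton_iff_unique_mem.2
          refine ⟨hMA, fun x hx => ?_⟩
          by_contra hne'
          have := hMsub x (Finset.mem_erase.2 ⟨hne', hx⟩)
          have hxle : x ≤ M := A.le_max' x hx
          interval_cases M <;> omega
        rw [hAe]
        have h1 : sumF {M} = fibF M := by simp [sumF]
        rw [h1]
        exact lt_of_lt_of_le (fibF_strictMono (Nat.lt_succ_self M))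
          (fibF_strictMono.monotone (by omega))

lemma rep_unique : ∀ N : ℕ, ∀ A B : Finset ℕ, Adm A → Adm B → sumF A = N → sumF B = N → A = B := by
  intro N
  induction N using Nat.strong_induction_on with
  | _ N ih =>
    intro A B hA hB hsA hsB
    rcases A.eq_empty_or_nonempty with rfl | hneA
    · rcases B.eq_empty_or_nonempty with rfl | hneB
      · rfl
      · exfalso
        have : 0 < sumF B := lt_of_lt_of_le (fibF_pos _) (fibF_le_sumF (B.min'_mem hneB))
        simp [sumF] at hsA; omega
    · rcases B.eq_empty_or_nonempty with rfl | hneB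
      · exfalso
        have : 0 < sumF A := lt_of_lt_of_le (fibF_pos _) (fibF_le_sumF (A.min'_mem hneA))
        simp [sumF] at hsB; omega
      · set MA := A.max' hneA
        set MB := B.max' hneB
        have hA1 : fibF MA ≤ N := hsA ▸ fibF_le_sumF (A.max'_mem hneA)
        have hA2 : N < fibF (MA + 1) := hsA ▸ sumF_lt MA A hA (fun k hk => A.le_max' k hk)
        have hB1 : fibF MB ≤ N := hsB ▸ fibF_le_sumF (B.max'_mem hneB)
        have hB2 : N < fibF (MB + 1) := hsB ▸ sumF_lt MB B hB (fun k hk => B.le_max' k hk)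
        have hMM : MA = MB := by
          by_contra hne
          rcases Nat.lt_or_ge MA MB with h | h
          · have : fibF (MA+1) ≤ fibF MB := fibF_strictMono.monotone (by omega)
            omega
          · have : MB < MA := by omega
            have : fibF (MB+1) ≤ fibF MA := fibF_strictMono.monotone (by omega)
            omega
        have hsplitA : sumF A = fibF MA + sumF (A.erase MA) := by
          simpa [sumF] using (Finset.add_sum_erase A fibF (A.max'_mem hneA)).symm
        have hsplitB : sumF B = fibF MB + sumF (B.erase MB) := by
          simpa [sumF] using (Finset.add_sum_erase B fibF (B.max'_mem hneB)).symm
        have hpos : 0 < fibF MA := fibF_pos _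
        have hlt : sumF (A.erase MA) < N := by omega
        have heq : A.erase MA = B.erase MB := by
          apply ih (sumF (A.erase MA)) hlt
          · exact hA.mono (A.erase_subset _)
          · exact hB.mono (B.erase_subset _)
          · rfl
          · rw [← hMM] at hsplitB ⊢; omega
        have : A = insert MA (A.erase MA) := (Finset.insert_erase (A.max'_mem hneA)).symm
        rw [this, heq, hMM, Finset.insert_erase (B.max'_mem hneB)]

lemma rep_exists : ∀ N : ℕ, ∃ A : Finset ℕ, Adm A ∧ sumF A = N := by
  intro N
  induction N using Nat.strong_induction_on with
  | _ N ih =>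
    rcases Nat.eq_zero_or_pos N with rfl | hN
    · exact ⟨∅, fun k hk => by simp at hk, by simp [sumF]⟩
    · set K := Nat.findGreatest (fun j => fibF j ≤ N) N with hK
      have hK1 : fibF K ≤ N := by
        have := Nat.findGreatest_spec (P := fun j => fibF j ≤ N) (m := 0) (Nat.zero_le N)
          (by simp only [fibF]; omega)
        exact this
      have hK2 : N < fibF (K+1) := by
        by_contra h
        push_neg at h
        have hKN : K + 1 ≤ N := le_trans (fibF_ge (K+1)) h |>.trans' (by omega)
        exact Nat.findGreatest_is_greatest (Nat.lt_succ_self K) hKN h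
      obtain ⟨A', hA', hsA'⟩ := ih (N - fibF K) (by have := fibF_pos K; omega)
      have hbound : ∀ k ∈ A', k + 2 ≤ K := by
        intro k hk
        have h1 : fibF k ≤ N - fibF K := hsA' ▸ fibF_le_sumF hk
        rcases Nat.eq_zero_or_pos K with hK0 | hKpos
        · exfalso
          rw [hK0] at hK1 hK2 h1
          have h2 : fibF (0+1) = 2 := rfl
          have h3 : fibF 0 = 1 := rfl
          rw [h3] at hK1 h1
          rw [h2] at hK2
          have hN1 : N = 1 := by omega
          rw [hN1] at h1
          have := fibF_pos k
          omega
        · have hKK : fibF (K+1) = fibF K + fibF (K-1) := by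
            have := fibF_add_two (K-1)
            rw [show K - 1 + 2 = K + 1 by omega, show K - 1 + 1 = K by omega] at this
            exact this
          have hk1 : fibF k < fibF (K-1) := by omega
          have := fibF_strictMono.lt_iff_lt.1 hk1
          omega
      refine ⟨insert K A', ?_, ?_⟩
      · intro k hk
        rcases Finset.mem_insert.1 hk with rfl | hk'
        · intro hmem
          rcases Finset.mem_insert.1 hmem with h | h
          · omega
          · have := hbound _ h; omega
        · intro hmem
          rcases Finset.mem_insert.1 hmem with h | h
          · have := hbound _ hk'; omega
          · exact hA' k hk' h
      · have hKA' : K ∉ A' := fun h => by have := hbound _ h; omega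
        rw [sumF, Finset.sum_insert hKA']
        have : ∑ k ∈ A', fibF k = N - fibF K := hsA'
        omega

noncomputable def zmem (N : ℕ) : Finset ℕ := (rep_exists N).choose

lemma zmem_adm (N : ℕ) : Adm (zmem N) := (rep_exists N).choose_spec.1
lemma zmem_sum (N : ℕ) : sumF (zmem N) = N := (rep_exists N).choose_spec.2

lemma zmem_eq {N : ℕ} {A : Finset ℕ} (hA : Adm A) (hs : sumF A = N) : zmem N = A :=
  rep_unique N _ _ (zmem_adm N) hA (zmem_sum N) hs

lemma zmem_zero : zmem 0 = ∅ := zmem_eq (fun k hk => by simp at hk) (by simp [sumF])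

lemma zmem_single (k : ℕ) : zmem (fibF k) = {k} :=
  zmem_eq (fun j hj hj2 => by simp at hj hj2; omega) (by simp [sumF])

lemma zmem_nonempty {N : ℕ} (hN : N ≠ 0) : (zmem N).Nonempty := by
  rcases (zmem N).eq_empty_or_nonempty with h | h
  · exfalso; have := zmem_sum N; rw [h] at this; simp [sumF] at this; omega
  · exact h

/-- Zeckendorf digits of `N` in the base `fibF`: `N = ∑ i, zeck N i * fibF i`,
with `zeck N i ∈ {0,1}` and no two consecutive `1`'s. -/
def zeck (N i : ℕ) : ℕ :=
  if h : N = 0 then 0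
  else if i = Nat.findGreatest (fun j => fibF j ≤ N) N then 1
  else zeck (N - fibF (Nat.findGreatest (fun j => fibF j ≤ N) N)) i
termination_by N
decreasing_by
  exact Nat.sub_lt (Nat.pos_of_ne_zero h) (fibF_pos _)

lemma zeck_eq_zmem : ∀ N i, zeck N i = if i ∈ zmem N then 1 else 0 := by
  intro N
  induction N using Nat.strong_induction_on with
  | _ N ih =>
    intro i
    rw [zeck]
    rcases Nat.eq_zero_or_pos N with rfl | hN
    · simp [zmem_zero]
    · rw [dif_neg (by omega)]
      set K := Nat.findGreatest (fun j => fibF j ≤ N) N with hKdef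
      have hK1 : fibF K ≤ N := by
        have := Nat.findGreatest_spec (P := fun j => fibF j ≤ N) (m := 0) (Nat.zero_le N)
          (by simp only [fibF]; omega)
        exact this
      have hK2 : N < fibF (K+1) := by
        by_contra h
        push_neg at h
        have hKN : K + 1 ≤ N := le_trans (fibF_ge (K+1)) h |>.trans' (by omega)
        exact Nat.findGreatest_is_greatest (Nat.lt_succ_self K) hKN h
      have hbound : ∀ k ∈ zmem (N - fibF K), k + 2 ≤ K := by
        intro k hk
        have h1 : fibF k ≤ N - fibF K := by
          have := fibF_le_sumF hk
          rwa [zmem_sum] at this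
        rcases Nat.eq_zero_or_pos K with hK0 | hKpos
        · exfalso
          rw [hK0] at hK1 hK2 h1
          have h2 : fibF (0+1) = 2 := rfl
          have h3 : fibF 0 = 1 := rfl
          rw [h3] at hK1 h1
          rw [h2] at hK2
          have hN1 : N = 1 := by omega
          rw [hN1] at h1
          have := fibF_pos k
          omega
        · have hKK : fibF (K+1) = fibF K + fibF (K-1) := by
            have := fibF_add_two (K-1)
            rw [show K - 1 + 2 = K + 1 by omega, show K - 1 + 1 = K by omega] at this
            exact this
          have hk1 : fibF k < fibF (K-1) := by omega
          have := fibF_strictMono.lt_iff_lt.1 hk1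
          omega
      have hKnotmem : K ∉ zmem (N - fibF K) := fun h => by have := hbound _ h; omega
      have hzN : zmem N = insert K (zmem (N - fibF K)) := by
        apply zmem_eq
        · intro k hk
          rcases Finset.mem_insert.1 hk with rfl | hk'
          · intro hmem
            rcases Finset.mem_insert.1 hmem with h | h
            · omega
            · have := hbound _ h; omega
          · intro hmem
            rcases Finset.mem_insert.1 hmem with h | h
            · have := hbound _ hk'; omega
            · exact (zmem_adm _) k hk' h
        · rw [sumF, Finset.sum_insert hKnotmem]
          have : ∑ k ∈ zmem (N - fibF K), fibF k = N - fibF K := zmem_sum _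
          omega
      rw [hzN]
      by_cases hiK : i = K
      · subst hiK; simp
      · rw [if_neg hiK, ih (N - fibF K) (by have := fibF_pos K; omega) i]
        have : i ∈ insert K (zmem (N - fibF K)) ↔ i ∈ zmem (N - fibF K) := by
          simp [Finset.mem_insert, hiK]
        simp [this]

lemma zeck_one_iff {N i : ℕ} : zeck N i = 1 ↔ i ∈ zmem N := by
  rw [zeck_eq_zmem]; split <;> simp_all

lemma zeck_zero_iff {N i : ℕ} : zeck N i = 0 ↔ i ∉ zmem N := by
  rw [zeck_eq_zmem]; split <;> simp_all

/-! ### Patterns -/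

def pat (r : ℕ) : Finset ℕ := (Finset.range r).filter (fun k => ¬ k % 2 = r % 2)

lemma pat_mem {k r : ℕ} : k ∈ pat r ↔ k < r ∧ ¬ k % 2 = r % 2 := by
  simp [pat]

lemma pat_adm (r : ℕ) : Adm (pat r) := by
  intro k hk hk1
  rw [pat_mem] at hk hk1
  omega

lemma pat_zero : pat 0 = ∅ := by ext k; simp [pat_mem]

lemma pat_one : pat 1 = {0} := by ext k; simp [pat_mem]; omega

lemma pat_succ_succ (r : ℕ) : pat (r+2) = insert (r+1) (pat r) := by
  ext k
  simp only [pat_mem, Finset.mem_insert]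
  constructor
  · rintro ⟨hlt, hp⟩
    by_cases h : k = r + 1
    · left; exact h
    · right; constructor
      · rcases Nat.lt_or_ge k r with h' | h'
        · exact h'
        · exfalso
          have : k = r ∨ k = r + 1 := by omega
          rcases this with rfl | rfl
          · omega
          · omega
      · omega
  · rintro (rfl | ⟨hlt, hp⟩)
    · constructor
      · omega
      · omega
    · exact ⟨by omega, by omega⟩

lemma r1_not_mem_pat (r : ℕ) : r + 1 ∉ pat r := by
  rw [pat_mem]; omega

lemma sumF_pat : ∀ r, sumF (pat r) = fibF r - 1 := by
  intro r
  induction r using Nat.strong_induction_on with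
  | _ r ih =>
    match r with
    | 0 => simp [pat_zero, sumF, fibF]
    | 1 => simp [pat_one, sumF, fibF]
    | (r+2) =>
      rw [pat_succ_succ, sumF, Finset.sum_insert (r1_not_mem_pat r)]
      have h1 : ∑ k ∈ pat r, fibF k = fibF r - 1 := ih r (by omega)
      have h2 : fibF (r+2) = fibF (r+1) + fibF r := rfl
      have := fibF_pos r
      omega

/-! ### union surgery -/

lemma zmem_bound {x k r : ℕ} (hk : k ∈ zmem x) (hx : x < fibF r) : k < r := by
  have h1 : fibF k ≤ x := by
    have := fibF_le_sumF hk; rwa [zmem_sum] at this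
  exact fibF_strictMono.lt_iff_lt.1 (lt_of_le_of_lt h1 hx)

lemma zmem_union {A B : Finset ℕ} (hA : Adm A) (hB : Adm B)
    (hsep : ∀ a ∈ A, ∀ b ∈ B, b + 2 ≤ a) : zmem (sumF A + sumF B) = A ∪ B := by
  have hdisj : Disjoint A B := by
    rw [Finset.disjoint_left]
    intro a ha hb
    have := hsep a ha a hb; omega
  apply zmem_eq
  · intro k hk hk1
    rcases Finset.mem_union.1 hk with h | h <;> rcases Finset.mem_union.1 hk1 with h' | h'
    · exact hA k h h'
    · have := hsep k h (k+1) h'; omega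
    · have := hsep (k+1) h' k h; omega
    · exact hB k h h'
  · rw [sumF, Finset.sum_union hdisj]; rfl

lemma zmem_add_sep {N x : ℕ} (hsep : ∀ a ∈ zmem N, ∀ b ∈ zmem x, b + 2 ≤ a) :
    zmem (N + x) = zmem N ∪ zmem x := by
  have := zmem_union (zmem_adm N) (zmem_adm x) hsep
  rwa [zmem_sum, zmem_sum] at this

/-! ### Pprod, g, tval, θ, G -/

/-- `Pprod p t = p 1 * p 2 * ⋯ * p t`. -/
def Pprod (p : ℕ → ℝ) (t : ℕ) : ℝ := ∏ i ∈ Finset.Icc 1 t, p i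

section Pstuff
variable (p : ℕ → ℝ)

lemma Pprod_zero : Pprod p 0 = 1 := by simp [Pprod]

lemma Pprod_one : Pprod p 1 = p 1 := by simp [Pprod]

lemma Pprod_succ (t : ℕ) : Pprod p (t+1) = Pprod p t * p (t+1) := by
  rw [Pprod, Pprod, ← Finset.prod_Icc_succ_top (by omega)]

noncomputable def gfun (k : ℕ) : ℝ := if k = 0 then 1 else p ((k+1)/2 + 1)

noncomputable def tval (N : ℕ) : ℝ := ∏ k ∈ zmem N, gfun p k

noncomputable def thprod (r : ℕ) : ℝ := ∏ k ∈ pat r, gfun p k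

noncomputable def Gfun (r : ℕ) : ℝ := Pprod p ((r+1)/2 + 1) * Pprod p (r/2 + 1)

noncomputable def wcoef (r : ℕ) : ℝ := Pprod p ((r+1)/2) * (1 - p ((r+1)/2 + 1))

variable (hp : ∀ i, 1 ≤ i → 0 < p i ∧ p i ≤ 1)
include hp

lemma Pprod_pos (t : ℕ) : 0 < Pprod p t := by
  apply Finset.prod_pos
  intro i hi
  exact (hp i (Finset.mem_Icc.1 hi).1).1

lemma gfun_pos (k : ℕ) : 0 < gfun p k := by
  rw [gfun]; split
  · norm_num
  · exact (hp _ (by omega)).1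

lemma tval_pos (N : ℕ) : 0 < tval p N :=
  Finset.prod_pos (fun k _ => gfun_pos p hp k)

lemma thprod_pos (r : ℕ) : 0 < thprod p r :=
  Finset.prod_pos (fun k _ => gfun_pos p hp k)

omit hp

lemma thprod_eq : ∀ r, p 1 * thprod p r = Pprod p (r/2 + 1) := by
  intro r
  induction r using Nat.strong_induction_on with
  | _ r ih =>
    match r with
    | 0 => simp [thprod, pat_zero, Pprod_one]
    | 1 => simp [thprod, pat_one, gfun, Pprod_one]
    | (r+2) =>
      rw [thprod, pat_succ_succ, Finset.prod_insert (r1_not_mem_pat r)]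
      have h1 := ih r (by omega)
      rw [thprod] at h1
      have h2 : gfun p (r+1) = p (r/2 + 1 + 1) := by
        rw [gfun, if_neg (by omega)]; congr 1; omega
      have h3 : (r+2)/2 + 1 = (r/2 + 1) + 1 := by omega
      rw [h3, Pprod_succ, ← h1, h2]; ring

lemma Gfun_succ_mul (r : ℕ) : Gfun p r = Gfun p (r - 1) * gfun p r := by
  match r with
  | 0 => simp [gfun]
  | (r+1) =>
    simp only [Nat.add_sub_cancel, Gfun]
    have hg : gfun p (r+1) = p ((r+1+1)/2 + 1) := by
      rw [gfun, if_neg (by omega)]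
    rw [hg]
    rcases Nat.even_or_odd r with ⟨m, rfl⟩ | ⟨m, rfl⟩
    · rw [show m + m = 2*m from by omega]
      simp only [show (2*m+1+1)/2 = m+1 from by omega, show (2*m+1)/2 = m from by omega,
        show (2*m)/2 = m from by omega]
      rw [Pprod_succ p (m+1)]
      ring
    · simp only [show (2*m+1+1+1)/2 = m+1 from by omega, show (2*m+1+1)/2 = m+1 from by omega,
        show (2*m+1)/2 = m from by omega]
      rw [Pprod_succ p (m+1)]
      ring

lemma tele_term (r : ℕ) (hr : 1 ≤ r) :
    p 1 * (wcoef p r * thprod p r) = Gfun p (r-1) - Gfun p r := by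
  have h1 : p 1 * (wcoef p r * thprod p r) = wcoef p r * (p 1 * thprod p r) := by ring
  rw [h1, thprod_eq, wcoef, Gfun, Gfun]
  match r, hr with
  | (r+1), _ =>
    simp only [Nat.add_sub_cancel]
    rcases Nat.even_or_odd r with ⟨m, rfl⟩ | ⟨m, rfl⟩
    · rw [show m + m = 2*m from by omega]
      simp only [show (2*m+1+1)/2 = m+1 from by omega, show (2*m+1)/2 = m from by omega,
        show (2*m)/2 = m from by omega]
      rw [Pprod_succ p (m+1)]
      ring
    · simp only [show (2*m+1+1+1)/2 = m+1 from by omega, show (2*m+1+1)/2 = m+1 from by omega,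
        show (2*m+1)/2 = m from by omega]
      rw [Pprod_succ p (m+1)]
      ring

lemma tele_sum (R : ℕ) :
    p 1 * ∑ r ∈ Finset.Icc 1 R, wcoef p r * thprod p r = Gfun p 0 - Gfun p R := by
  induction R with
  | zero => simp
  | succ R ih =>
    rw [Finset.sum_Icc_succ_top (show 1 ≤ R+1 from by omega), mul_add, ih,
      tele_term p (R+1) (by omega)]
    simp only [Nat.add_sub_cancel]
    ring

end Pstuff

lemma zeck_eq_zero_of_lt : ∀ N, ∀ i, N < i → zeck N i = 0 := by
  intro N
  induction N using Nat.strong_induction_on with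
  | _ N ih =>
    intro i hi
    rw [zeck]
    split
    · rfl
    · rename_i h
      have hkN : Nat.findGreatest (fun j => fibF j ≤ N) N ≤ N := Nat.findGreatest_le N
      rw [if_neg (by omega)]
      exact ih _ (Nat.sub_lt (Nat.pos_of_ne_zero h) (fibF_pos _)) i
        (lt_of_le_of_lt (Nat.sub_le _ _) hi)

lemma exists_break0 (N : ℕ) : ∃ i, ¬(zeck N (2*i+1) = 1 ∧ zeck N (2*i) = 0) := by
  refine ⟨N + 1, ?_⟩
  have h : zeck N (2*(N+1)+1) = 0 := zeck_eq_zero_of_lt N _ (by omega)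
  simp [h]

lemma exists_break1 (N : ℕ) : ∃ i, ¬(zeck N (2*i+2) = 1 ∧ zeck N (2*i+1) = 0) := by
  refine ⟨N + 1, ?_⟩
  have h : zeck N (2*(N+1)+2) = 0 := zeck_eq_zero_of_lt N _ (by omega)
  simp [h]

/-- The number `s` of `10`-blocks carried in the stochastic Fibonacci adding machine:
if the digits of `N` end with `00(10)^s` (case `ε₀ = 0`) or with `00(10)^s1`
(case `ε₀ = 1`), this returns `s`. -/
def carryLen (N : ℕ) : ℕ :=
  if zeck N 0 = 0 then Nat.find (exists_break0 N) else Nat.find (exists_break1 N)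

lemma carryLen_of_not_mem {N : ℕ} (h0 : 0 ∉ zmem N) :
    carryLen N = Nat.find (exists_break0 N) := by
  rw [carryLen, if_pos (zeck_zero_iff.2 h0)]

lemma carryLen_of_mem {N : ℕ} (h0 : 0 ∈ zmem N) :
    carryLen N = Nat.find (exists_break1 N) := by
  rw [carryLen, if_neg (by rw [zeck_eq_zmem, if_pos h0]; omega)]

lemma carryLen_ge0 {N m : ℕ} (h0 : 0 ∉ zmem N)
    (hlow : ∀ a < m, 2*a+1 ∈ zmem N ∧ 2*a ∉ zmem N) : m ≤ carryLen N := by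
  rw [carryLen_of_not_mem h0]
  rw [Nat.le_find_iff]
  intro a ha hnot
  exact hnot ⟨zeck_one_iff.2 (hlow a ha).1, zeck_zero_iff.2 (hlow a ha).2⟩

lemma carryLen_low0 {N m : ℕ} (h0 : 0 ∉ zmem N) (hm : m ≤ carryLen N) :
    ∀ a < m, 2*a+1 ∈ zmem N ∧ 2*a ∉ zmem N := by
  rw [carryLen_of_not_mem h0, Nat.le_find_iff] at hm
  intro a ha
  have h := hm a ha
  push_neg at h
  exact ⟨zeck_one_iff.1 h.1, zeck_zero_iff.1 h.2⟩

lemma carryLen_eq0 {N s : ℕ} (h0 : 0 ∉ zmem N)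
    (hlow : ∀ a < s, 2*a+1 ∈ zmem N ∧ 2*a ∉ zmem N)
    (htop : 2*s+1 ∉ zmem N) : carryLen N = s := by
  rw [carryLen_of_not_mem h0, Nat.find_eq_iff]
  constructor
  · intro hc
    exact htop (zeck_one_iff.1 hc.1)
  · intro a ha hnot
    exact hnot ⟨zeck_one_iff.2 (hlow a ha).1, zeck_zero_iff.2 (hlow a ha).2⟩

lemma carryLen_ge1 {N m : ℕ} (h0 : 0 ∈ zmem N)
    (hlow : ∀ a < m, 2*a+2 ∈ zmem N ∧ 2*a+1 ∉ zmem N) : m ≤ carryLen N := by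
  rw [carryLen_of_mem h0]
  rw [Nat.le_find_iff]
  intro a ha hnot
  exact hnot ⟨zeck_one_iff.2 (hlow a ha).1, zeck_zero_iff.2 (hlow a ha).2⟩

lemma carryLen_low1 {N m : ℕ} (h0 : 0 ∈ zmem N) (hm : m ≤ carryLen N) :
    ∀ a < m, 2*a+2 ∈ zmem N ∧ 2*a+1 ∉ zmem N := by
  rw [carryLen_of_mem h0, Nat.le_find_iff] at hm
  intro a ha
  have h := hm a ha
  push_neg at h
  exact ⟨zeck_one_iff.1 h.1, zeck_zero_iff.1 h.2⟩

lemma carryLen_eq1 {N s : ℕ} (h0 : 0 ∈ zmem N)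
    (hlow : ∀ a < s, 2*a+2 ∈ zmem N ∧ 2*a+1 ∉ zmem N)
    (htop : 2*s+2 ∉ zmem N) : carryLen N = s := by
  rw [carryLen_of_mem h0, Nat.find_eq_iff]
  constructor
  · intro hc
    exact htop (zeck_one_iff.1 hc.1)
  · intro a ha hnot
    exact hnot ⟨zeck_one_iff.2 (hlow a ha).1, zeck_zero_iff.2 (hlow a ha).2⟩

/-! ### source decompositions -/

lemma zmem_target {j r : ℕ} (hz : ∀ k ∈ zmem j, r + 1 ≤ k) :
    zmem (j + (fibF r - 1)) = zmem j ∪ pat r := by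
  have hpat : zmem (fibF r - 1) = pat r := zmem_eq (pat_adm r) (sumF_pat r)
  rw [zmem_add_sep, hpat]
  intro a ha b hb
  rw [hpat] at hb
  have h1 := (pat_mem.1 hb).1
  have h2 := hz a ha
  omega

lemma sum_split {i : ℕ} {P : Finset ℕ} (hsub : P ⊆ zmem i) :
    i = sumF (zmem i \ P) + sumF P ∧ zmem (sumF (zmem i \ P)) = zmem i \ P := by
  have hdisj : Disjoint (zmem i \ P) P := Finset.sdiff_disjoint
  have hsplit : zmem i = (zmem i \ P) ∪ P := (Finset.sdiff_union_of_subset hsub).symm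
  constructor
  · have h1 : sumF (zmem i) = i := zmem_sum i
    have h2 : sumF (zmem i) = sumF (zmem i \ P) + sumF P := by
      conv_lhs => rw [hsplit]
      rw [sumF, Finset.sum_union hdisj]
      rfl
    omega
  · exact zmem_eq ((zmem_adm i).mono (Finset.sdiff_subset)) rfl

lemma source_decomp0 {i m : ℕ} (hm : 1 ≤ m) (h0 : 0 ∉ zmem i) (hcl : m ≤ carryLen i) :
    (∀ k ∈ zmem (i + 1 - fibF (2*m)), 2*m + 1 ≤ k) ∧
      i = (i + 1 - fibF (2*m)) + (fibF (2*m) - 1) := by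
  have hlow := carryLen_low0 h0 hcl
  have hsub : pat (2*m) ⊆ zmem i := by
    intro k hk
    rw [pat_mem] at hk
    obtain ⟨a, rfl⟩ : ∃ a, k = 2*a+1 := ⟨k/2, by omega⟩
    exact (hlow a (by omega)).1
  obtain ⟨hsum, hzA⟩ := sum_split hsub
  have hAk : ∀ k ∈ zmem i \ pat (2*m), 2*m+1 ≤ k := by
    intro k hk
    rw [Finset.mem_sdiff] at hk
    obtain ⟨hk1, hk2⟩ := hk
    by_contra hlt
    push_neg at hlt
    rcases Nat.even_or_odd k with ⟨a, hae⟩ | ⟨a, hae⟩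
    · rcases Nat.lt_or_ge k (2*m) with h | h
      · have := (hlow a (by omega)).2
        rw [show 2*a = k from by omega] at this
        exact this hk1
      · have hkk : k = 2*m := by omega
        have h1 : 2*(m-1)+1 ∈ zmem i := (hlow (m-1) (by omega)).1
        have h2 := zmem_adm i _ h1
        rw [show 2*(m-1)+1+1 = k from by omega] at h2
        exact h2 hk1
    · exact hk2 (pat_mem.2 ⟨by omega, by omega⟩)
  have hFst := sumF_pat (2*m)
  have hFpos := fibF_pos (2*m)
  have harith : i + 1 - fibF (2*m) = sumF (zmem i \ pat (2*m)) := by omega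
  constructor
  · intro k hk
    rw [harith, hzA] at hk
    exact hAk k hk
  · omega

lemma source_decomp1 {i m : ℕ} (hm : 1 ≤ m) (h0 : 0 ∈ zmem i) (hcl : m ≤ carryLen i + 1) :
    (∀ k ∈ zmem (i + 1 - fibF (2*m-1)), 2*m ≤ k) ∧
      i = (i + 1 - fibF (2*m-1)) + (fibF (2*m-1) - 1) := by
  have hlow := carryLen_low1 h0 (show m - 1 ≤ carryLen i from by omega)
  have hsub : pat (2*m-1) ⊆ zmem i := by
    intro k hk
    rw [pat_mem] at hk
    have hpar : k % 2 = 0 := by omega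
    obtain ⟨a, rfl⟩ : ∃ a, k = 2*a := ⟨k/2, by omega⟩
    rcases Nat.eq_zero_or_pos a with rfl | ha
    · exact h0
    · have := (hlow (a-1) (by omega)).1
      rwa [show 2*(a-1)+2 = 2*a from by omega] at this
  obtain ⟨hsum, hzA⟩ := sum_split hsub
  have hAk : ∀ k ∈ zmem i \ pat (2*m-1), 2*m ≤ k := by
    intro k hk
    rw [Finset.mem_sdiff] at hk
    obtain ⟨hk1, hk2⟩ := hk
    by_contra hlt
    push_neg at hlt
    rcases Nat.even_or_odd k with ⟨a, hae⟩ | ⟨a, hae⟩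
    · exact hk2 (pat_mem.2 ⟨by omega, by omega⟩)
    · -- k odd ≤ 2m-1
      rcases Nat.lt_or_ge k (2*m-1) with h | h
      · have := (hlow a (by omega)).2
        rw [show 2*a+1 = k from by omega] at this
        exact this hk1
      · have hkk : k = 2*m-1 := by omega
        have h1 : 2*m-2 ∈ zmem i := by
          rcases Nat.eq_zero_or_pos (m-1) with hm1 | hm1
          · rw [show 2*m-2 = 0 from by omega]; exact h0
          · have := (hlow (m-2) (by omega)).1
            rwa [show 2*(m-2)+2 = 2*m-2 from by omega] at this
        have h2 := zmem_adm i _ h1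
        rw [show 2*m-2+1 = k from by omega] at h2
        exact h2 hk1
  have hFst := sumF_pat (2*m-1)
  have hFpos := fibF_pos (2*m-1)
  have harith : i + 1 - fibF (2*m-1) = sumF (zmem i \ pat (2*m-1)) := by omega
  constructor
  · intro k hk
    rw [harith, hzA] at hk
    exact hAk k hk
  · omega

/-! ### Smat -/

/-- The transition matrix `S` of the Fibonacci stochastic adding machine associated to
the probability sequence `p`:  `S N N = 1 - p 1`;  if the digits of `N` end with
`00(10)^s` then `S N (N+1) = p 1 ⋯ p (s+1)` and `S N (N+1-F (2m)) = p 1 ⋯ p m * (1 - p (m+1))`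
for `1 ≤ m ≤ s`;  if the digits of `N` end with `00(10)^s1` then
`S N (N+1) = p 1 ⋯ p (s+2)` and `S N (N+1-F (2m-1)) = p 1 ⋯ p m * (1 - p (m+1))` for
`1 ≤ m ≤ s+1`;  all other entries vanish. -/
noncomputable def Smat (p : ℕ → ℝ) (N M : ℕ) : ℝ :=
  (if M = N then 1 - p 1 else 0) +
  if zeck N 0 = 0 then
    (if M = N + 1 then Pprod p (carryLen N + 1) else 0) +
    ∑ m ∈ Finset.Icc 1 (carryLen N),
      (if M = N + 1 - fibF (2*m) then Pprod p m * (1 - p (m+1)) else 0)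
  else
    (if M = N + 1 then Pprod p (carryLen N + 2) else 0) +
    ∑ m ∈ Finset.Icc 1 (carryLen N + 1),
      (if M = N + 1 - fibF (2*m - 1) then Pprod p m * (1 - p (m+1)) else 0)

lemma Smat_diag (p : ℕ → ℝ) {j : ℕ} (hj : 1 ≤ j) : Smat p j j = 1 - p 1 := by
  rw [Smat, if_pos rfl]
  split
  · rw [if_neg (by omega), Finset.sum_eq_zero, add_zero, add_zero]
    intro m hm
    have hm1 := (Finset.mem_Icc.1 hm).1
    have := fibF_two_le (2*m) (by omega)
    exact if_neg (by omega)
  · rw [if_neg (by omega), Finset.sum_eq_zero, add_zero, add_zero]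
    intro m hm
    have hm1 := (Finset.mem_Icc.1 hm).1
    have := fibF_two_le (2*m-1) (by omega)
    exact if_neg (by omega)

lemma Smat_up (p : ℕ → ℝ) {j z : ℕ} (hj : 1 ≤ j) (hmem : z ∈ zmem j)
    (hmin : ∀ k ∈ zmem j, z ≤ k) : Smat p (j-1) j = Pprod p ((z+1)/2 + 1) := by
  classical
  set H := (zmem j).erase z with hH
  have hHk : ∀ k ∈ H, z + 2 ≤ k := by
    intro k hk
    have hk1 := Finset.mem_of_mem_erase hk
    have hk2 := Finset.ne_of_mem_erase hk
    have hk3 := hmin k hk1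
    have hk4 : k ≠ z + 1 := fun h => (zmem_adm j z hmem) (h ▸ hk1)
    omega
  have hzH : zmem (sumF H) = H := zmem_eq ((zmem_adm j).mono (Finset.erase_subset _ _)) rfl
  have hsum : j = fibF z + sumF H := by
    have h1 := (Finset.add_sum_erase (zmem j) fibF hmem).symm
    have h2 : sumF (zmem j) = j := zmem_sum j
    rw [sumF] at h2
    rw [← hH] at h1
    rw [sumF]
    omega
  have hFz := fibF_pos z
  have hj1 : j - 1 = sumF H + (fibF z - 1) := by omega
  have hzj1 : zmem (j-1) = H ∪ pat z := by
    rw [hj1, zmem_target (by intro k hk; rw [hzH] at hk; have := hHk k hk; omega), hzH]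
  rcases Nat.even_or_odd z with hev | hodd
  · -- even z
    obtain ⟨s, rfl⟩ : ∃ s, z = 2*s := ⟨z/2, by rcases hev with ⟨a, h⟩; omega⟩
    have h0 : 0 ∉ zmem (j-1) := by
      rw [hzj1]
      intro h
      rcases Finset.mem_union.1 h with h | h
      · have := hHk 0 h; omega
      · rw [pat_mem] at h; omega
    have hcl : carryLen (j-1) = s := by
      apply carryLen_eq0 h0
      · intro a ha
        constructor
        · rw [hzj1]
          exact Finset.mem_union_right _ (pat_mem.2 ⟨by omega, by omega⟩)
        · rw [hzj1]
          intro h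
          rcases Finset.mem_union.1 h with h | h
          · have := hHk _ h; omega
          · rw [pat_mem] at h; omega
      · rw [hzj1]
        intro h
        rcases Finset.mem_union.1 h with h | h
        · have := hHk _ h; omega
        · rw [pat_mem] at h; omega
    rw [Smat, if_neg (by omega), if_pos (zeck_zero_iff.2 h0), if_pos (by omega), hcl]
    rw [Finset.sum_eq_zero, add_zero, zero_add]
    · congr 1
      omega
    · intro m hm
      have hm1 := (Finset.mem_Icc.1 hm).1
      have := fibF_two_le (2*m) (by omega)
      exact if_neg (by omega)
  · -- odd z
    obtain ⟨s, rfl⟩ : ∃ s, z = 2*s+1 := ⟨z/2, by rcases hodd with ⟨a, h⟩; omega⟩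
    have h0 : 0 ∈ zmem (j-1) := by
      rw [hzj1]
      exact Finset.mem_union_right _ (pat_mem.2 ⟨by omega, by omega⟩)
    have hcl : carryLen (j-1) = s := by
      apply carryLen_eq1 h0
      · intro a ha
        constructor
        · rw [hzj1]
          exact Finset.mem_union_right _ (pat_mem.2 ⟨by omega, by omega⟩)
        · rw [hzj1]
          intro h
          rcases Finset.mem_union.1 h with h | h
          · have := hHk _ h; omega
          · rw [pat_mem] at h; omega
      · rw [hzj1]
        intro h
        rcases Finset.mem_union.1 h with h | h
        · have := hHk _ h; omega
        · rw [pat_mem] at h; omega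
    rw [Smat, if_neg (by omega),
      if_neg (by rw [zeck_eq_zmem, if_pos h0]; omega), if_pos (by omega), hcl]
    rw [Finset.sum_eq_zero, add_zero, zero_add]
    · congr 1
      omega
    · intro m hm
      have hm1 := (Finset.mem_Icc.1 hm).1
      have := fibF_two_le (2*m-1) (by omega)
      exact if_neg (by omega)

lemma Smat_source (p : ℕ → ℝ) {j r : ℕ} (hj : 1 ≤ j) (hr : 1 ≤ r)
    (hz : ∀ k ∈ zmem j, r + 1 ≤ k) :
    Smat p (j + (fibF r - 1)) j = Pprod p ((r+1)/2) * (1 - p ((r+1)/2 + 1)) := by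
  classical
  set i := j + (fibF r - 1) with hi
  have hFr2 : 2 ≤ fibF r := fibF_two_le r hr
  have hij : j + 1 ≤ i := by omega
  have hzi : zmem i = zmem j ∪ pat r := zmem_target hz
  have hfi : Function.Injective fibF := fibF_strictMono.injective
  rcases Nat.even_or_odd r with hev | hodd
  · obtain ⟨m, rfl⟩ : ∃ m, r = 2*m := ⟨r/2, by rcases hev with ⟨a, h⟩; omega⟩
    have hm1 : 1 ≤ m := by omega
    have h0 : 0 ∉ zmem i := by
      rw [hzi]
      intro h
      rcases Finset.mem_union.1 h with h | h
      · have := hz 0 h; omega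
      · rw [pat_mem] at h; omega
    have hcl : m ≤ carryLen i := by
      apply carryLen_ge0 h0
      intro a ha
      constructor
      · rw [hzi]
        exact Finset.mem_union_right _ (pat_mem.2 ⟨by omega, by omega⟩)
      · rw [hzi]
        intro h
        rcases Finset.mem_union.1 h with h | h
        · have := hz _ h; omega
        · rw [pat_mem] at h; omega
    rw [Smat, if_neg (by omega), if_pos (zeck_zero_iff.2 h0), if_neg (by omega), zero_add]
    rw [Finset.sum_eq_single_of_mem m (Finset.mem_Icc.2 ⟨hm1, hcl⟩)]
    · rw [if_pos (by omega), show (2*m+1)/2 = m from by omega]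
      ring
    · intro b hb hbne
      apply if_neg
      intro hJ
      obtain ⟨hb1, hb2⟩ := Finset.mem_Icc.1 hb
      obtain ⟨_, heq⟩ := source_decomp0 hb1 h0 hb2
      rw [← hJ] at heq
      have hFb := fibF_pos (2*b)
      have : fibF (2*b) = fibF (2*m) := by omega
      have h2 := hfi this
      omega
  · obtain ⟨m, rfl⟩ : ∃ m, r = 2*m+1 := ⟨r/2, by rcases hodd with ⟨a, h⟩; omega⟩
    have h0 : 0 ∈ zmem i := by
      rw [hzi]
      exact Finset.mem_union_right _ (pat_mem.2 ⟨by omega, by omega⟩)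
    have hcl : m ≤ carryLen i := by
      apply carryLen_ge1 h0
      intro a ha
      constructor
      · rw [hzi]
        exact Finset.mem_union_right _ (pat_mem.2 ⟨by omega, by omega⟩)
      · rw [hzi]
        intro h
        rcases Finset.mem_union.1 h with h | h
        · have := hz _ h; omega
        · rw [pat_mem] at h; omega
    rw [Smat, if_neg (by omega), if_neg (by rw [zeck_eq_zmem, if_pos h0]; omega),
      if_neg (by omega), zero_add]
    rw [Finset.sum_eq_single_of_mem (m+1) (Finset.mem_Icc.2 ⟨by omega, by omega⟩)]
    · rw [if_pos (by rw [show 2*(m+1)-1 = 2*m+1 from by omega]; omega),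
        show (2*m+1+1)/2 = m+1 from by omega]
      ring
    · intro b hb hbne
      apply if_neg
      intro hJ
      obtain ⟨hb1, hb2⟩ := Finset.mem_Icc.1 hb
      obtain ⟨_, heq⟩ := source_decomp1 hb1 h0 hb2
      rw [← hJ] at heq
      have hFb := fibF_pos (2*b-1)
      have hFF : fibF (2*b-1) = fibF (2*m+1) := by omega
      have := hfi hFF
      omega

lemma Smat_off (p : ℕ → ℝ) {i j : ℕ} (hj : 1 ≤ j) (hdiag : i ≠ j) (hup : i + 1 ≠ j)
    (hsrc : ∀ r, 1 ≤ r → (∀ k ∈ zmem j, r + 1 ≤ k) → i ≠ j + (fibF r - 1)) :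
    Smat p i j = 0 := by
  rw [Smat, if_neg (by omega)]
  split
  · rename_i hbr
    have h0 : 0 ∉ zmem i := zeck_zero_iff.1 hbr
    rw [if_neg (by omega), Finset.sum_eq_zero]
    · norm_num
    intro m hm
    obtain ⟨hm1, hm2⟩ := Finset.mem_Icc.1 hm
    apply if_neg
    intro hJ
    obtain ⟨hk, heq⟩ := source_decomp0 hm1 h0 hm2
    rw [← hJ] at hk heq
    exact hsrc (2*m) (by omega) hk heq
  · rename_i hbr
    have h0 : 0 ∈ zmem i := by
      by_contra h
      exact hbr (zeck_zero_iff.2 h)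
    rw [if_neg (by omega), Finset.sum_eq_zero]
    · norm_num
    intro m hm
    obtain ⟨hm1, hm2⟩ := Finset.mem_Icc.1 hm
    apply if_neg
    intro hJ
    obtain ⟨hk, heq⟩ := source_decomp1 hm1 h0 (by omega)
    rw [← hJ] at hk heq
    exact hsrc (2*m-1) (by omega)
      (by intro k hkk; have := hk k hkk; omega) heq

/-! ### column equation -/

lemma column_eq (p : ℕ → ℝ) (μ : ℕ → ℂ)
    (hinv : ∀ j : ℕ, μ j = ∑' i : ℕ, μ i * (Smat p i j : ℂ))
    {j z : ℕ} (hj : 1 ≤ j) (hmem : z ∈ zmem j) (hmin : ∀ k ∈ zmem j, z ≤ k) :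
    μ j = μ (j-1) * ((Pprod p ((z+1)/2 + 1) : ℝ) : ℂ) + μ j * (((1 : ℝ) - p 1 : ℝ) : ℂ)
      + ∑ r ∈ Finset.Icc 1 (z-1),
          μ (j + (fibF r - 1)) * ((Pprod p ((r+1)/2) * (1 - p ((r+1)/2 + 1)) : ℝ) : ℂ) := by
  classical
  set E : Finset ℕ :=
    insert (j-1) (insert j ((Finset.Icc 1 (z-1)).image (fun r => j + (fibF r - 1)))) with hE
  have himg : ∀ r ∈ Finset.Icc 1 (z-1), j + 1 ≤ j + (fibF r - 1) := by
    intro r hr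
    have := fibF_two_le r (Finset.mem_Icc.1 hr).1
    omega
  have hcol : ∀ i, i ∉ E → μ i * ((Smat p i j : ℝ) : ℂ) = 0 := by
    intro i hi
    rw [hE] at hi
    simp only [Finset.mem_insert, Finset.mem_image, not_or, not_exists] at hi
    obtain ⟨h1, h2, h3⟩ := hi
    have hS : Smat p i j = 0 := by
      apply Smat_off p hj h2 (by omega)
      intro r hr hzk heq
      have hrz : r + 1 ≤ z := hzk z hmem
      have hmem' : r ∈ Finset.Icc 1 (z-1) := Finset.mem_Icc.2 ⟨hr, by omega⟩
      exact h3 r ⟨hmem', heq.symm⟩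
    rw [hS]
    simp
  have h0 : μ j = ∑ i ∈ E, μ i * ((Smat p i j : ℝ) : ℂ) := by
    rw [hinv j]; exact tsum_eq_sum hcol
  rw [hE] at h0
  have hne1 : j - 1 ∉ insert j ((Finset.Icc 1 (z-1)).image (fun r => j + (fibF r - 1))) := by
    simp only [Finset.mem_insert, Finset.mem_image, not_or, not_exists]
    constructor
    · omega
    · intro r hr
      have := himg r hr.1
      omega
  have hne2 : j ∉ (Finset.Icc 1 (z-1)).image (fun r => j + (fibF r - 1)) := by
    simp only [Finset.mem_image, not_exists]
    intro r hr
    have := himg r hr.1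
    omega
  rw [Finset.sum_insert hne1, Finset.sum_insert hne2, Finset.sum_image (by
    intro r1 h1 r2 h2 heq
    have hf1 := fibF_two_le r1 (Finset.mem_Icc.1 h1).1
    have hf2 := fibF_two_le r2 (Finset.mem_Icc.1 h2).1
    have : fibF r1 = fibF r2 := by simp only at heq; omega
    exact fibF_strictMono.injective this)] at h0
  have hsum : (∑ r ∈ Finset.Icc 1 (z-1), μ (j + (fibF r - 1)) * ((Smat p (j + (fibF r - 1)) j : ℝ) : ℂ))
      = ∑ r ∈ Finset.Icc 1 (z-1),
          μ (j + (fibF r - 1)) * ((Pprod p ((r+1)/2) * (1 - p ((r+1)/2 + 1)) : ℝ) : ℂ) := by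
    apply Finset.sum_congr rfl
    intro r hr
    obtain ⟨hr1, hr2⟩ := Finset.mem_Icc.1 hr
    rw [Smat_source p hj hr1 (fun k hk => le_trans (by omega) (hmin k hk))]
  rw [hsum, Smat_up p hj hmem hmin, Smat_diag p hj] at h0
  linear_combination h0

/-! ### tval identities -/

lemma zmem_pred {j z : ℕ} (hj : 1 ≤ j) (hmem : z ∈ zmem j) (hmin : ∀ k ∈ zmem j, z ≤ k) :
    zmem (j-1) = (zmem j).erase z ∪ pat z ∧ (∀ k ∈ (zmem j).erase z, z + 2 ≤ k) := by
  have hHk : ∀ k ∈ (zmem j).erase z, z + 2 ≤ k := by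
    intro k hk
    have hk1 := Finset.mem_of_mem_erase hk
    have hk2 := Finset.ne_of_mem_erase hk
    have hk3 := hmin k hk1
    have hk4 : k ≠ z + 1 := fun h => (zmem_adm j z hmem) (h ▸ hk1)
    omega
  refine ⟨?_, hHk⟩
  have hzH : zmem (sumF ((zmem j).erase z)) = (zmem j).erase z :=
    zmem_eq ((zmem_adm j).mono (Finset.erase_subset _ _)) rfl
  have hsum : j = fibF z + sumF ((zmem j).erase z) := by
    have h1 := (Finset.add_sum_erase (zmem j) fibF hmem).symm
    have h2 : sumF (zmem j) = j := zmem_sum j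
    rw [sumF] at h2
    rw [sumF]
    omega
  have hFz := fibF_pos z
  have hj1 : j - 1 = sumF ((zmem j).erase z) + (fibF z - 1) := by omega
  rw [hj1, zmem_target (by intro k hk; rw [hzH] at hk; have := hHk k hk; omega), hzH]

lemma disj_pat {A : Finset ℕ} {r : ℕ} (hA : ∀ k ∈ A, r ≤ k) : Disjoint A (pat r) := by
  rw [Finset.disjoint_left]
  intro a ha hpa
  have h1 := hA a ha
  have h2 := (pat_mem.1 hpa).1
  omega

lemma tval_target (p : ℕ → ℝ) {N r : ℕ} (hz : ∀ k ∈ zmem N, r + 1 ≤ k) :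
    tval p (N + (fibF r - 1)) = tval p N * thprod p r := by
  rw [tval, zmem_target hz,
    Finset.prod_union (disj_pat (fun k hk => by have := hz k hk; omega))]
  rfl

lemma Gfun_pos (p : ℕ → ℝ) (hp : ∀ i, 1 ≤ i → 0 < p i ∧ p i ≤ 1) (r : ℕ) :
    0 < Gfun p r := mul_pos (Pprod_pos p hp _) (Pprod_pos p hp _)

lemma Gfun_zero (p : ℕ → ℝ) : Gfun p 0 = p 1 * p 1 := by
  simp [Gfun, Pprod_one]

lemma key_identity (p : ℕ → ℝ) {N z : ℕ} (hN : 1 ≤ N) (hmem : z ∈ zmem N)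
    (hmin : ∀ k ∈ zmem N, z ≤ k) :
    Gfun p (z-1) * tval p N = p 1 * Pprod p ((z+1)/2 + 1) * tval p (N-1) := by
  obtain ⟨hpred, hHk⟩ := zmem_pred hN hmem hmin
  have htN : tval p N = gfun p z * ∏ k ∈ (zmem N).erase z, gfun p k := by
    rw [tval, Finset.mul_prod_erase _ _ hmem]
  have htN1 : tval p (N-1) = (∏ k ∈ (zmem N).erase z, gfun p k) * thprod p z := by
    rw [tval, hpred, Finset.prod_union (disj_pat (fun k hk => by have := hHk k hk; omega))]
    rfl
  have hGz : Gfun p z = Gfun p (z-1) * gfun p z := Gfun_succ_mul p z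
  have hth : p 1 * thprod p z = Pprod p (z/2 + 1) := thprod_eq p z
  have hGdef : Gfun p z = Pprod p ((z+1)/2 + 1) * Pprod p (z/2 + 1) := rfl
  calc Gfun p (z-1) * tval p N
      = (Gfun p (z-1) * gfun p z) * ∏ k ∈ (zmem N).erase z, gfun p k := by rw [htN]; ring
    _ = Pprod p ((z+1)/2 + 1) * (p 1 * thprod p z) * ∏ k ∈ (zmem N).erase z, gfun p k := by
        rw [← hGz, hGdef, hth]
    _ = p 1 * Pprod p ((z+1)/2 + 1) * tval p (N-1) := by rw [htN1]; ring

lemma tval_zero_eq_one (p : ℕ → ℝ) : tval p 0 = 1 := by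
  rw [tval, zmem_zero, Finset.prod_empty]

/-! ### main induction -/

lemma ratio (p : ℕ → ℝ) (hp : ∀ i, 1 ≤ i → 0 < p i ∧ p i ≤ 1) (μ : ℕ → ℂ)
    (hinv : ∀ j : ℕ, μ j = ∑' i : ℕ, μ i * (Smat p i j : ℂ)) :
    ∀ z N, 1 ≤ N → z ∈ zmem N → (∀ k ∈ zmem N, z ≤ k) →
      ((tval p (N-1) : ℝ) : ℂ) * μ N = ((tval p N : ℝ) : ℂ) * μ (N-1) := by
  intro z
  induction z using Nat.strong_induction_on with
  | _ z ih =>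
    intro N hN hmem hmin
    have hchain : ∀ r, 1 ≤ r → r ≤ z - 1 → ∀ y, y ≤ fibF r - 1 →
        ((tval p N : ℝ) : ℂ) * μ (N + y) = ((tval p (N + y) : ℝ) : ℂ) * μ N := by
      intro r hr1 hr2 y
      induction y with
      | zero => simp
      | succ y ihy =>
        intro hy
        have ihy' := ihy (by omega)
        have hxF : y + 1 < fibF r := by have := fibF_pos r; omega
        have hbk : ∀ k ∈ zmem (y+1), k < r := fun k hk => zmem_bound hk hxF
        have hrz : r + 1 ≤ z := by omega
        have hsep : ∀ a ∈ zmem N, ∀ b ∈ zmem (y+1), b + 2 ≤ a := by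
          intro a ha b hb
          have h1 := hbk b hb
          have h2 := hmin a ha
          omega
        have hun : zmem (N + (y+1)) = zmem N ∪ zmem (y+1) := zmem_add_sep hsep
        have hne : (zmem (y+1)).Nonempty := zmem_nonempty (by omega)
        have hz'mem : (zmem (y+1)).min' hne ∈ zmem (N + (y+1)) := by
          rw [hun]; exact Finset.mem_union_right _ ((zmem (y+1)).min'_mem hne)
        have hz'min : ∀ k ∈ zmem (N + (y+1)), (zmem (y+1)).min' hne ≤ k := by
          intro k hk
          rw [hun] at hk
          rcases Finset.mem_union.1 hk with hk | hk
          · have h1 := hmin k hk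
            have h2 := hbk _ ((zmem (y+1)).min'_mem hne)
            omega
          · exact (zmem (y+1)).min'_le k hk
        have hz'lt : (zmem (y+1)).min' hne < z := by
          have := hbk _ ((zmem (y+1)).min'_mem hne)
          omega
        have hR := ih _ hz'lt (N + (y+1)) (by omega) hz'mem hz'min
        rw [show N + (y+1) - 1 = N + y from by omega] at hR
        have ht : ((tval p (N+y) : ℝ) : ℂ) ≠ 0 := by
          simp only [ne_eq, Complex.ofReal_eq_zero]
          exact ne_of_gt (tval_pos p hp (N+y))
        apply mul_left_cancel₀ ht
        calc ((tval p (N+y) : ℝ) : ℂ) * (((tval p N : ℝ) : ℂ) * μ (N + (y+1)))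
            = ((tval p N : ℝ) : ℂ) * (((tval p (N+y) : ℝ) : ℂ) * μ (N + (y+1))) := by ring
          _ = ((tval p N : ℝ) : ℂ) * (((tval p (N+(y+1)) : ℝ) : ℂ) * μ (N + y)) := by rw [hR]
          _ = ((tval p (N+(y+1)) : ℝ) : ℂ) * (((tval p N : ℝ) : ℂ) * μ (N+y)) := by ring
          _ = ((tval p (N+(y+1)) : ℝ) : ℂ) * (((tval p (N+y) : ℝ) : ℂ) * μ N) := by rw [ihy']
          _ = ((tval p (N+y) : ℝ) : ℂ) * (((tval p (N+(y+1)) : ℝ) : ℂ) * μ N) := by ring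
    have hcol := column_eq p μ hinv hN hmem hmin
    have hsub : ∀ r ∈ Finset.Icc 1 (z-1),
        μ (N + (fibF r - 1)) = ((thprod p r : ℝ) : ℂ) * μ N := by
      intro r hr
      obtain ⟨hr1, hr2⟩ := Finset.mem_Icc.1 hr
      have h1 := hchain r hr1 hr2 (fibF r - 1) le_rfl
      have ht := tval_target p (N := N) (r := r) (fun k hk => by
        have h2 := hmin k hk; omega)
      rw [ht] at h1
      have htn : ((tval p N : ℝ) : ℂ) ≠ 0 := by
        simp only [ne_eq, Complex.ofReal_eq_zero]
        exact ne_of_gt (tval_pos p hp N)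
      apply mul_left_cancel₀ htn
      rw [h1]
      push_cast
      ring
    rw [Finset.sum_congr rfl (fun r hr => by rw [hsub r hr])] at hcol
    -- hcol : μ N = μ (N-1) * Q + μ N * (1 - p 1) + ∑ r, (θr * μ N) * wr
    have hsum2 : (∑ r ∈ Finset.Icc 1 (z-1), ((thprod p r : ℝ) : ℂ) * μ N *
          ((Pprod p ((r+1)/2) * (1 - p ((r+1)/2 + 1)) : ℝ) : ℂ))
        = ((∑ r ∈ Finset.Icc 1 (z-1), wcoef p r * thprod p r : ℝ) : ℂ) * μ N := by
      push_cast
      rw [Finset.sum_mul]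
      apply Finset.sum_congr rfl
      intro r hr
      rw [wcoef]
      push_cast
      ring
    rw [hsum2] at hcol
    have htele := tele_sum p (z-1)
    have hGz := Gfun_zero p
    -- derive : (Gfun p (z-1) : ℂ) * μ N = (p1 * Q : ℂ) * μ (N-1)
    have hmain : ((Gfun p (z-1) : ℝ) : ℂ) * μ N
        = ((p 1 * Pprod p ((z+1)/2 + 1) : ℝ) : ℂ) * μ (N-1) := by
      have hcol' := congrArg (fun w => ((p 1 : ℝ) : ℂ) * w) hcol
      have htele_c : ((p 1 : ℝ) : ℂ) *
          ((∑ r ∈ Finset.Icc 1 (z-1), wcoef p r * thprod p r : ℝ) : ℂ)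
          = ((Gfun p 0 : ℝ) : ℂ) - ((Gfun p (z-1) : ℝ) : ℂ) := by
        rw [← Complex.ofReal_mul, htele]
        push_cast
        ring
      have hGz_c : ((Gfun p 0 : ℝ) : ℂ) = ((p 1 : ℝ) : ℂ) * ((p 1 : ℝ) : ℂ) := by
        rw [hGz]; push_cast; ring
      push_cast at hcol' htele_c hGz_c ⊢
      linear_combination hcol' + μ N * htele_c + μ N * hGz_c
    have hkey := key_identity p hN hmem hmin
    have hkey_c : ((Gfun p (z-1) : ℝ) : ℂ) * ((tval p N : ℝ) : ℂ)
        = ((p 1 * Pprod p ((z+1)/2 + 1) : ℝ) : ℂ) * ((tval p (N-1) : ℝ) : ℂ) := by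
      rw [← Complex.ofReal_mul, ← Complex.ofReal_mul, hkey]
    have hGne : ((Gfun p (z-1) : ℝ) : ℂ) ≠ 0 := by
      simp only [ne_eq, Complex.ofReal_eq_zero]
      exact ne_of_gt (Gfun_pos p hp (z-1))
    apply mul_left_cancel₀ hGne
    calc ((Gfun p (z-1) : ℝ) : ℂ) * (((tval p (N-1) : ℝ) : ℂ) * μ N)
        = ((tval p (N-1) : ℝ) : ℂ) * (((Gfun p (z-1) : ℝ) : ℂ) * μ N) := by ring
      _ = ((tval p (N-1) : ℝ) : ℂ) * (((p 1 * Pprod p ((z+1)/2 + 1) : ℝ) : ℂ) * μ (N-1)) := by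
          rw [hmain]
      _ = (((p 1 * Pprod p ((z+1)/2 + 1) : ℝ) : ℂ) * ((tval p (N-1) : ℝ) : ℂ)) * μ (N-1) := by
          ring
      _ = (((Gfun p (z-1) : ℝ) : ℂ) * ((tval p N : ℝ) : ℂ)) * μ (N-1) := by rw [hkey_c]
      _ = ((Gfun p (z-1) : ℝ) : ℂ) * (((tval p N : ℝ) : ℂ) * μ (N-1)) := by ring

lemma mu_prop (p : ℕ → ℝ) (hp : ∀ i, 1 ≤ i → 0 < p i ∧ p i ≤ 1) (μ : ℕ → ℂ)
    (hinv : ∀ j : ℕ, μ j = ∑' i : ℕ, μ i * (Smat p i j : ℂ)) :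
    ∀ N, μ N = ((tval p N : ℝ) : ℂ) * μ 0 := by
  intro N
  induction N using Nat.strong_induction_on with
  | _ N ih =>
    rcases Nat.eq_zero_or_pos N with rfl | hN
    · rw [tval_zero_eq_one]; simp
    · have hne : (zmem N).Nonempty := zmem_nonempty (by omega)
      have hR := ratio p hp μ hinv ((zmem N).min' hne) N hN ((zmem N).min'_mem hne)
        (fun k hk => Finset.min'_le _ k hk)
      have hIH := ih (N-1) (by omega)
      rw [hIH] at hR
      have ht : ((tval p (N-1) : ℝ) : ℂ) ≠ 0 := by
        simp only [ne_eq, Complex.ofReal_eq_zero]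
        exact ne_of_gt (tval_pos p hp (N-1))
      apply mul_left_cancel₀ ht
      rw [hR]; ring

/-- If `∑_{i ≥ 1} p i = +∞` (the `p i` are not summable), then every
summable complex sequence `μ ∈ ℓ¹(ℕ)` with `μ S = μ` is identically zero; in particular
the chain admits no invariant probability measure. -/
theorem stmt6 (p : ℕ → ℝ) (hp : ∀ i, 1 ≤ i → 0 < p i ∧ p i ≤ 1)
    (hdiv : ¬ Summable (fun i : ℕ => p (i+1)))
    (μ : ℕ → ℂ) (hμ : Summable μ)
    (hinv : ∀ j : ℕ, μ j = ∑' i : ℕ, μ i * (Smat p i j : ℂ)) :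
    ∀ i, μ i = 0 := by
  have hmu := mu_prop p hp μ hinv
  rcases eq_or_ne (μ 0) 0 with h0 | h0
  · intro i
    rw [hmu i, h0, mul_zero]
  · exfalso
    apply hdiv
    have hinj : Function.Injective (fun s : ℕ => fibF (2*s+1)) := by
      intro a b h
      have := fibF_strictMono.injective h
      omega
    have hs : Summable (fun s : ℕ => μ (fibF (2*s+1))) := hμ.comp_injective hinj
    have heq : ∀ s : ℕ, μ (fibF (2*s+1)) = ((p (s+2) : ℝ) : ℂ) * μ 0 := by
      intro s
      rw [hmu (fibF (2*s+1)), tval, zmem_single, Finset.prod_singleton, gfun,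
        if_neg (by omega), show (2*s+1+1)/2 + 1 = s + 2 from by omega]
    have hs2 : Summable (fun s : ℕ => ((p (s+2) : ℝ) : ℂ) * μ 0) := hs.congr heq
    have hs3 : Summable (fun s : ℕ => ((p (s+2) : ℝ) : ℂ)) := by
      have := hs2.mul_right (μ 0)⁻¹
      apply this.congr
      intro s
      field_simp
    have hs4 : Summable (fun s : ℕ => p (s+2)) := by
      rwa [Complex.summable_ofReal] at hs3
    have hs5 : Summable (fun s : ℕ => (fun i : ℕ => p (i+1)) (s+1)) := by
      apply hs4.congr
      intro s
      show p (s+2) = p (s+1+1)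
      congr 1
    exact (summable_nat_add_iff 1).1 hs5
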